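/- If S is a finite set of unit vectors in EuclideanSpace ℝ (Fin 3) such that the graph on S in which two vectors are adjacent if and only if they are orthogonal has chromatic number 4, then some vector in S has at least one irrational coordinate. -/

import Mathlib

open scoped RealInnerProductSpace

private lemma sq_mod_four_even (x : ℤ) (h : Even x) : x ^ 2 % 4 = 0 := by
  obtain ⟨y, rfl⟩ := h
  have : (y + y) ^ 2 = 4 * (y * y) := by ring
  omega

private lemma sq_mod_four_odd (x : ℤ) (h : Odd x) : x ^ 2 % 4 = 1 := by
  obtain ⟨y, rfl⟩ := h
  have : (2 * y + 1) ^ 2 = 4 * (y * y + y) + 1 := by ring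
  omega

/-- Mod-4 analysis: in `a²+b²+c² = m²`, either exactly one of `a,b,c` is odd,
or all are even. -/
private lemma mod4_cases (a b c m : ℤ) (h : a^2 + b^2 + c^2 = m^2) :
    (Odd a ∧ Even b ∧ Even c) ∨ (Even a ∧ Odd b ∧ Even c) ∨
    (Even a ∧ Even b ∧ Odd c) ∨ (Even a ∧ Even b ∧ Even c) := by
  have key : ∀ x : ℤ, (Even x ∧ x ^ 2 % 4 = 0) ∨ (Odd x ∧ x ^ 2 % 4 = 1) := by
    intro x
    rcases Int.even_or_odd x with hx | hx
    · exact Or.inl ⟨hx, sq_mod_four_even x hx⟩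
    · exact Or.inr ⟨hx, sq_mod_four_odd x hx⟩
  rcases key a with ⟨ha, ha4⟩ | ⟨ha, ha4⟩ <;> rcases key b with ⟨hb, hb4⟩ | ⟨hb, hb4⟩ <;>
    rcases key c with ⟨hc, hc4⟩ | ⟨hc, hc4⟩ <;> rcases key m with ⟨hm, hm4⟩ | ⟨hm, hm4⟩ <;>
      first
      | exact Or.inl ⟨ha, hb, hc⟩
      | exact Or.inr (Or.inl ⟨ha, hb, hc⟩)
      | exact Or.inr (Or.inr (Or.inl ⟨ha, hb, hc⟩))
      | exact Or.inr (Or.inr (Or.inr ⟨ha, hb, hc⟩))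
      | omega

/-- 2-adic descent: a nonzero Pythagorean-like quadruple is a power of two times
one where exactly one of the first three entries is odd. -/
private lemma descent : ∀ n : ℕ, ∀ a b c m : ℤ, m.natAbs ≤ n → m ≠ 0 →
    a^2 + b^2 + c^2 = m^2 →
    ∃ (k : ℕ) (A B C M : ℤ), a = 2^k * A ∧ b = 2^k * B ∧ c = 2^k * C ∧ m = 2^k * M ∧
      ((Odd A ∧ Even B ∧ Even C) ∨ (Even A ∧ Odd B ∧ Even C) ∨
       (Even A ∧ Even B ∧ Odd C)) := by
  intro n
  induction n with
  | zero =>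
    intro a b c m hle hm _
    exact absurd (Int.natAbs_eq_zero.mp (Nat.le_zero.mp hle)) hm
  | succ n ih =>
    intro a b c m hle hm h
    rcases mod4_cases a b c m h with h1 | h2 | h3 | h4
    · exact ⟨0, a, b, c, m, by ring, by ring, by ring, by ring, Or.inl h1⟩
    · exact ⟨0, a, b, c, m, by ring, by ring, by ring, by ring, Or.inr (Or.inl h2)⟩
    · exact ⟨0, a, b, c, m, by ring, by ring, by ring, by ring, Or.inr (Or.inr h3)⟩
    · obtain ⟨⟨A, hA⟩, ⟨B, hB⟩, ⟨C, hC⟩⟩ := h4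
      have hmE : Even m := by
        rcases Int.even_or_odd m with hm' | hm'
        · exact hm'
        · exfalso
          have h4m := sq_mod_four_odd m hm'
          have hsum : a ^ 2 + b ^ 2 + c ^ 2 = 4 * (A^2 + B^2 + C^2) := by
            subst hA hB hC; ring
          omega
      obtain ⟨M, hM⟩ := hmE
      have heq : A^2 + B^2 + C^2 = M^2 := by
        have h4 : 4 * (A^2 + B^2 + C^2) = 4 * M^2 := by
          subst hA hB hC hM; linear_combination h
        linarith
      have hM0 : M ≠ 0 := by rintro rfl; simp at hM; exact hm hM
      have habs : m.natAbs = 2 * M.natAbs := by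
        rw [hM, show M + M = 2 * M by ring, Int.natAbs_mul]
        norm_num
      have hle' : M.natAbs ≤ n := by
        have : M.natAbs ≠ 0 := fun h' => hM0 (Int.natAbs_eq_zero.mp h')
        omega
      obtain ⟨k, A', B', C', M', hA', hB', hC', hM', hodd⟩ := ih A B C M hle' hM0 heq
      exact ⟨k + 1, A', B', C', M',
        by rw [hA, hA']; ring, by rw [hB, hB']; ring, by rw [hC, hC']; ring,
        by rw [hM, hM']; ring, hodd⟩

/-- `P x i`: `x` is a common rational/integer multiple pattern with the `i`-th
integer coordinate odd and the others even. -/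
private def P (x : EuclideanSpace ℝ (Fin 3)) (i : Fin 3) : Prop :=
  ∃ (A : Fin 3 → ℤ) (t : ℚ), t ≠ 0 ∧ (∀ l, x l = (A l : ℝ) * (t : ℝ)) ∧
    Odd (A i) ∧ ∀ j, j ≠ i → Even (A j)

private lemma exists_P (x : EuclideanSpace ℝ (Fin 3)) (hx : ∑ l, x l ^ 2 = 1)
    (hq : ∀ l, ∃ q : ℚ, x l = (q : ℝ)) : ∃ i, P x i := by
  choose q hq using hq
  set d : ℤ := ((q 0).den * (q 1).den * (q 2).den : ℤ) with hd
  have hd0 : d ≠ 0 := by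
    simp only [hd]
    positivity
  have hdq : (d : ℚ) ≠ 0 := by exact_mod_cast hd0
  have hnum : ∀ l : Fin 3, ((q l).num : ℚ) = q l * (q l).den := fun l =>
    mod_cast (Rat.mul_den_eq_num (q l)).symm
  set a0 : ℤ := (q 0).num * ((q 1).den * (q 2).den) with ha0d
  set a1 : ℤ := (q 1).num * ((q 0).den * (q 2).den) with ha1d
  set a2 : ℤ := (q 2).num * ((q 0).den * (q 1).den) with ha2d
  have hc0 : ((a0 : ℚ)) = q 0 * (d : ℚ) := by
    simp only [ha0d, hd]; push_cast; rw [hnum 0]; ring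
  have hc1 : ((a1 : ℚ)) = q 1 * (d : ℚ) := by
    simp only [ha1d, hd]; push_cast; rw [hnum 1]; ring
  have hc2 : ((a2 : ℚ)) = q 2 * (d : ℚ) := by
    simp only [ha2d, hd]; push_cast; rw [hnum 2]; ring
  have hsumq : (q 0)^2 + (q 1)^2 + (q 2)^2 = 1 := by
    have : ((q 0 : ℝ))^2 + (q 1 : ℝ)^2 + (q 2 : ℝ)^2 = 1 := by
      rw [Fin.sum_univ_three] at hx
      rw [← hq 0, ← hq 1, ← hq 2]; exact hx
    exact_mod_cast this
  have heqz : a0 ^ 2 + a1 ^ 2 + a2 ^ 2 = d ^ 2 := by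
    have : ((a0 : ℚ))^2 + (a1 : ℚ)^2 + (a2 : ℚ)^2 = (d : ℚ)^2 := by
      rw [hc0, hc1, hc2]
      have : (q 0 * (d:ℚ))^2 + (q 1 * (d:ℚ))^2 + (q 2 * (d:ℚ))^2
          = ((q 0)^2 + (q 1)^2 + (q 2)^2) * (d:ℚ)^2 := by ring
      rw [this, hsumq, one_mul]
    exact_mod_cast this
  obtain ⟨k, A, B, C, M, h0, h1, h2, hM, hodd⟩ :=
    descent d.natAbs a0 a1 a2 d le_rfl hd0 heqz
  set A' : Fin 3 → ℤ := ![A, B, C] with hA'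
  set t : ℚ := (2^k : ℚ) / (d : ℚ) with ht
  have ht0 : t ≠ 0 := by
    simp only [ht]
    exact div_ne_zero (by positivity) hdq
  have hqA : ∀ l : Fin 3, (q l) = (A' l : ℚ) * t := by
    intro l
    have key : ∀ (al : ℤ) (Al : ℤ), ((al : ℚ)) = q l * (d : ℚ) → al = 2^k * Al →
        q l = (Al : ℚ) * t := by
      intro al Al hcast hal
      rw [hal] at hcast
      rw [ht]
      field_simp
      push_cast at hcast
      linarith [hcast]
    fin_cases l
    · exact key a0 A hc0 h0
    · exact key a1 B hc1 h1
    · exact key a2 C hc2 h2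
  have hrep : ∀ l, x l = (A' l : ℝ) * (t : ℝ) := by
    intro l
    rw [hq l, hqA l]
    push_cast
    ring
  have hv0 : A' 0 = A := rfl
  have hv1 : A' 1 = B := rfl
  have hv2 : A' 2 = C := rfl
  rcases hodd with ⟨hO, hE1, hE2⟩ | ⟨hE0, hO, hE2⟩ | ⟨hE0, hE1, hO⟩
  · refine ⟨0, A', t, ht0, hrep, hv0 ▸ hO, ?_⟩
    intro j hj
    fin_cases j
    · exact absurd rfl hj
    · exact hv1 ▸ hE1
    · exact hv2 ▸ hE2
  · refine ⟨1, A', t, ht0, hrep, hv1 ▸ hO, ?_⟩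
    intro j hj
    fin_cases j
    · exact hv0 ▸ hE0
    · exact absurd rfl hj
    · exact hv2 ▸ hE2
  · refine ⟨2, A', t, ht0, hrep, hv2 ▸ hO, ?_⟩
    intro j hj
    fin_cases j
    · exact hv0 ▸ hE0
    · exact hv1 ▸ hE1
    · exact absurd rfl hj

private lemma not_same_color (x y : EuclideanSpace ℝ (Fin 3)) (i : Fin 3)
    (hx : P x i) (hy : P y i) (h : ∑ l, x l * y l = 0) : False := by
  obtain ⟨A, t, ht0, hAx, hAodd, hAeven⟩ := hx
  obtain ⟨B, s, hs0, hBy, hBodd, hBeven⟩ := hy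
  have hsum : ((A 0 * B 0 + A 1 * B 1 + A 2 * B 2 : ℤ) : ℝ) * ((t : ℝ) * s) = 0 := by
    rw [Fin.sum_univ_three, hAx 0, hAx 1, hAx 2, hBy 0, hBy 1, hBy 2] at h
    push_cast
    nlinarith [h]
  have hts : ((t : ℝ) * s) ≠ 0 := by
    apply mul_ne_zero <;> exact_mod_cast ‹_›
  have hz : (A 0 * B 0 + A 1 * B 1 + A 2 * B 2 : ℤ) = 0 := by
    have := (mul_eq_zero.mp hsum).resolve_right hts
    exact_mod_cast this
  -- parity contradiction
  have hOdd : Odd (A 0 * B 0 + A 1 * B 1 + A 2 * B 2) := by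
    fin_cases i
    · have e1 : Even (A 1 * B 1) := (hAeven 1 (by decide)).mul_right _
      have e2 : Even (A 2 * B 2) := (hAeven 2 (by decide)).mul_right _
      exact ((hAodd.mul hBodd).add_even e1).add_even e2
    · have e0 : Even (A 0 * B 0) := (hAeven 0 (by decide)).mul_right _
      have e2 : Even (A 2 * B 2) := (hAeven 2 (by decide)).mul_right _
      exact (e0.add_odd (hAodd.mul hBodd)).add_even e2
    · have e0 : Even (A 0 * B 0) := (hAeven 0 (by decide)).mul_right _
      have e1 : Even (A 1 * B 1) := (hAeven 1 (by decide)).mul_right _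
      exact (e0.add e1).add_odd (hAodd.mul hBodd)
  rw [hz] at hOdd
  simp at hOdd

/-- The orthogonality graph on a finite set `S` of vectors in `ℝ³`: two
(distinct) vectors of `S` are adjacent iff they are orthogonal. -/
def orthGraphOn (S : Finset (EuclideanSpace ℝ (Fin 3))) :
    SimpleGraph {x : EuclideanSpace ℝ (Fin 3) // x ∈ S} where
  Adj u v := (u : EuclideanSpace ℝ (Fin 3)) ≠ (v : EuclideanSpace ℝ (Fin 3)) ∧
    ⟪(u : EuclideanSpace ℝ (Fin 3)), (v : EuclideanSpace ℝ (Fin 3))⟫ = 0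
  symm := ⟨fun u v h => by
    exact ⟨h.1.symm, by rw [real_inner_comm]; exact h.2⟩⟩
  loopless := ⟨fun u h => h.1 rfl⟩

/-- Any finite set of unit vectors in `ℝ³` whose orthogonality graph has
chromatic number four must contain a vector with an irrational coordinate. -/
theorem four_chromatic_set_has_irrational_coordinate
    (S : Finset (EuclideanSpace ℝ (Fin 3)))
    (hS : ∀ x ∈ S, ‖x‖ = 1)
    (hchrom : (orthGraphOn S).chromaticNumber = 4) :
    ∃ x ∈ S, ∃ i : Fin 3, ¬ ∃ q : ℚ, x i = (q : ℝ) := by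
  by_contra hcon
  push_neg at hcon
  have hrat : ∀ x ∈ S, ∀ i : Fin 3, ∃ q : ℚ, x i = (q : ℝ) := hcon
  have hexP : ∀ v : {x : EuclideanSpace ℝ (Fin 3) // x ∈ S}, ∃ i, P v.1 i := by
    intro v
    apply exists_P
    · have h1 : ‖v.1‖ = 1 := hS v.1 v.2
      have h2 : Real.sqrt (∑ l, ‖v.1 l‖ ^ 2) = 1 := (EuclideanSpace.norm_eq v.1 ▸ h1 :)
      have h3 : (∑ l, ‖v.1 l‖ ^ 2) = 1 := by
        nlinarith [Real.sq_sqrt (show (0:ℝ) ≤ ∑ l, ‖v.1 l‖ ^ 2 from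
          Finset.sum_nonneg fun i _ => sq_nonneg _)]
      simpa using h3
    · exact hrat v.1 v.2
  have coloring : (orthGraphOn S).Coloring (Fin 3) := by
    refine SimpleGraph.Coloring.mk (fun v => (hexP v).choose) ?_
    intro u v hadj hc
    have hinner : ∑ l, u.1 l * v.1 l = 0 := by
      have := hadj.2
      rw [PiLp.inner_apply] at this
      simpa [RCLike.inner_apply, mul_comm] using this
    have h2 := (hexP v).choose_spec
    rw [← hc] at h2
    exact not_same_color u.1 v.1 _ ((hexP u).choose_spec) h2 hinner
  have hcol : (orthGraphOn S).Colorable 3 := ⟨coloring⟩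
  have hle := hcol.chromaticNumber_le
  rw [hchrom] at hle
  norm_num at hle
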